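/- arXiv:0706.4104 — 2 statements merged into one kernel-verified Lean document; each statement's English description precedes it below -/
import Mathlib

section
/- Let G be a (d,ε)-regular graph on n vertices with 0 < 2ε < d ≤ 1, let c > 2, and let H be a subgraph of G with maximum degree Δ(H) ≤ (d/2 − c·ε)·n. Then the graph G' = G − H is connected, and every vertex subset X ⊆ V(G') of size at least εn satisfies |N_{G'}(X)| ≥ (1/2 + (c−2)·ε)·n. -/
/-- For disjoint vertex sets `A`, `B`, the ordered pairs `(a, b) ∈ A × B` forming an edge;
its cardinality is the number `e(A,B)` of edges between `A` and `B`. -/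
def edgesBetween {V : Type*} (G : SimpleGraph V) (A B : Set V) : Set (V × V) :=
  {x | x.1 ∈ A ∧ x.2 ∈ B ∧ G.Adj x.1 x.2}

/-- A graph `G` on `n` vertices is `(d,ε)`-regular if its minimum degree is at least `d n`,
and for every pair of disjoint vertex subsets `S, T` of sizes at least `ε n`,
`|e(S,T)/(|S||T|) − d| ≤ ε`. -/
def IsDERegular {n : ℕ} (G : SimpleGraph (Fin n)) (d ε : ℝ) : Prop :=
  (∀ v, d * n ≤ ((G.neighborSet v).ncard : ℝ)) ∧
  ∀ S T : Set (Fin n), Disjoint S T → ε * n ≤ S.ncard → ε * n ≤ T.ncard →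
    |((edgesBetween G S T).ncard : ℝ) / (S.ncard * T.ncard) - d| ≤ ε

/-- The set of all vertices adjacent in `G` to at least one vertex of `X`
(not necessarily disjoint from `X`). -/
def nbhd {V : Type*} (G : SimpleGraph V) (X : Set V) : Set V :=
  {v | ∃ x ∈ X, G.Adj x v}

open Finset in
lemma edgesBetween_ncard {V : Type*} [Fintype V] [DecidableEq V] (K : SimpleGraph V)
    (S T : Set V) :
    (edgesBetween K S T).ncard = ∑ s ∈ S.toFinite.toFinset, (K.neighborSet s ∩ T).ncard := by
  classical
  have h1 : (edgesBetween K S T).Finite := Set.toFinite _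
  have h2 : h1.toFinset = S.toFinite.toFinset.biUnion
      (fun s => ((K.neighborSet s ∩ T).toFinite.toFinset).image (fun t => (s, t))) := by
    ext ⟨a, b⟩
    simp only [Set.Finite.mem_toFinset, Finset.mem_biUnion, Finset.mem_image,
      Set.mem_inter_iff, SimpleGraph.mem_neighborSet, Prod.mk.injEq]
    constructor
    · rintro ⟨ha, hb, hadj⟩
      exact ⟨a, ha, b, ⟨hadj, hb⟩, rfl, rfl⟩
    · rintro ⟨s, hs, t, ⟨hadj, ht⟩, rfl, rfl⟩
      exact ⟨hs, ht, hadj⟩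
  rw [Set.ncard_eq_toFinset_card _ h1, h2, Finset.card_biUnion]
  · refine Finset.sum_congr rfl (fun s _ => ?_)
    rw [Finset.card_image_of_injective _ (fun x y h => by simpa using h),
      Set.ncard_eq_toFinset_card _ (Set.toFinite _)]
  · intro x _ y _ hxy
    simp only [Finset.disjoint_left, Finset.mem_image]
    rintro p ⟨t, _, rfl⟩ ⟨t', _, h⟩
    exact hxy (by simpa using (Prod.mk.injEq ..).mp h.symm |>.1)


set_option maxHeartbeats 1000000 in
/-- Let `G` be a `(d,ε)`-regular graph on `n ≥ 1` vertices with `0 < 2ε < d ≤ 1`, `c > 2`,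
and `H` a subgraph of `G` with `Δ(H) ≤ (d/2 − cε) n`. Then `G' = G − H` is connected and
every set `X` of at least `ε n` vertices satisfies `|N_{G'}(X)| ≥ (1/2 + (c−2)ε) n`. -/
theorem expansion_de_regular {n : ℕ} (hn : 0 < n) (d ε c : ℝ)
    (hε : 0 < 2 * ε) (hεd : 2 * ε < d) (hd1 : d ≤ 1) (hc : 2 < c)
    (G : SimpleGraph (Fin n)) (hG : IsDERegular G d ε)
    (H : SimpleGraph (Fin n)) (hHG : H ≤ G)
    (hH : ∀ v, ((H.neighborSet v).ncard : ℝ) ≤ (d / 2 - c * ε) * n) :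
    (G \ H).Connected ∧
      ∀ X : Set (Fin n), ε * n ≤ X.ncard →
        (1 / 2 + (c - 2) * ε) * n ≤ ((nbhd (G \ H) X).ncard : ℝ) := by
  classical
  have hε0 : 0 < ε := by linarith
  have hn0 : (0 : ℝ) < n := by exact_mod_cast hn
  have hcε : c * ε ≤ d / 2 := by
    have h0 := hH ⟨0, hn⟩
    have h1 : (0 : ℝ) ≤ ((H.neighborSet ⟨0, hn⟩).ncard : ℝ) := by positivity
    nlinarith
  -- minimum degree of G' = G \ H
  have hNsub : ∀ v, H.neighborSet v ⊆ G.neighborSet v := fun v u h => hHG h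
  have hδ : ∀ v, (d / 2 + c * ε) * n ≤ (((G \ H).neighborSet v).ncard : ℝ) := by
    intro v
    have hEq : (G \ H).neighborSet v = G.neighborSet v \ H.neighborSet v := by
      ext u; simp [SimpleGraph.mem_neighborSet]
    have hle : (H.neighborSet v).ncard ≤ (G.neighborSet v).ncard :=
      Set.ncard_le_ncard (hNsub v) (Set.toFinite _)
    have hdiff : ((G.neighborSet v \ H.neighborSet v).ncard : ℝ)
        = ((G.neighborSet v).ncard : ℝ) - ((H.neighborSet v).ncard : ℝ) := by
      rw [Set.ncard_diff (hNsub v) (Set.toFinite _)]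
      push_cast [hle]
      ring
    rw [hEq, hdiff]
    have := hG.1 v
    have := hH v
    nlinarith
  -- key regularity counting lemma
  have hLB : ∀ S T : Set (Fin n), Disjoint S T → ε * n ≤ (S.ncard : ℝ) →
      ε * n ≤ (T.ncard : ℝ) → (∀ s ∈ S, ∀ t ∈ T, ¬ (G \ H).Adj s t) →
      (d - ε) * (T.ncard : ℝ) ≤ (d / 2 - c * ε) * n := by
    intro S T hdisj hS hT hnoadj
    have hS0 : (0 : ℝ) < S.ncard := lt_of_lt_of_le (by positivity) hS
    have hT0 : (0 : ℝ) < T.ncard := lt_of_lt_of_le (by positivity) hT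
    have hreg := hG.2 S T hdisj hS hT
    rw [abs_le] at hreg
    have h3 : d - ε ≤ ((edgesBetween G S T).ncard : ℝ) / ((S.ncard : ℝ) * T.ncard) := by
      linarith [hreg.1]
    rw [le_div_iff₀ (by positivity)] at h3
    have hsubH : edgesBetween G S T ⊆ edgesBetween H S T := by
      rintro ⟨x, y⟩ ⟨hx, hy, hadj⟩
      refine ⟨hx, hy, ?_⟩
      by_contra hH'
      exact (hnoadj x hx y hy) (by simp [hadj, hH'])
    have hcount : ((edgesBetween H S T).ncard : ℝ)
        ≤ (S.ncard : ℝ) * ((d / 2 - c * ε) * n) := by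
      rw [edgesBetween_ncard]
      push_cast
      calc ∑ s ∈ S.toFinite.toFinset, ((H.neighborSet s ∩ T).ncard : ℝ)
          ≤ ∑ s ∈ S.toFinite.toFinset, (d / 2 - c * ε) * n := by
            refine Finset.sum_le_sum (fun s _ => ?_)
            refine le_trans ?_ (hH s)
            exact_mod_cast Nat.cast_le.mpr
              (Set.ncard_le_ncard Set.inter_subset_left (Set.toFinite _))
        _ = (S.toFinite.toFinset.card : ℝ) * ((d / 2 - c * ε) * n) := by
            rw [Finset.sum_const, nsmul_eq_mul]
        _ = (S.ncard : ℝ) * ((d / 2 - c * ε) * n) := by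
            rw [Set.ncard_eq_toFinset_card S (Set.toFinite S)]
    have hmono : ((edgesBetween G S T).ncard : ℝ) ≤ ((edgesBetween H S T).ncard : ℝ) :=
      Nat.cast_le.mpr (Set.ncard_le_ncard hsubH (Set.toFinite _))
    have h4 : (d - ε) * (S.ncard : ℝ) * (T.ncard : ℝ)
        ≤ (S.ncard : ℝ) * ((d / 2 - c * ε) * n) := by nlinarith
    nlinarith
  -- the key claim
  have key : ∀ X Y : Set (Fin n), (∀ x ∈ X, ∀ y ∈ Y, ¬ (G \ H).Adj x y) →
      ε * n ≤ (X.ncard : ℝ) → (1 / 2 - (c - 2) * ε) * n < (Y.ncard : ℝ) → False := by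
    intro X Y hnoadj hX hY
    have haw : ((X \ Y).ncard : ℝ) + ((X ∩ Y).ncard : ℝ) = (X.ncard : ℝ) := by
      have h := Set.ncard_diff_add_ncard_of_subset (Set.inter_subset_left (s := X) (t := Y))
        (Set.toFinite X)
      rw [Set.diff_self_inter] at h
      exact_mod_cast h
    have hwy : ((X ∩ Y).ncard : ℝ) + ((Y \ X).ncard : ℝ) = (Y.ncard : ℝ) := by
      have h := Set.ncard_diff_add_ncard_of_subset (Set.inter_subset_left (s := Y) (t := X))
        (Set.toFinite Y)
      rw [Set.diff_self_inter] at h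
      rw [Set.inter_comm X Y]
      exact_mod_cast (by omega : (Y ∩ X).ncard + (Y \ X).ncard = Y.ncard)
    have hsum : ((X ∪ Y).ncard : ℝ) + (((X ∪ Y)ᶜ).ncard : ℝ) = n := by
      have h1 := Set.ncard_add_ncard_compl (X ∪ Y) (Set.toFinite _) (Set.toFinite _)
      have h3 : Nat.card (Fin n) = n := by simp
      rw [h3] at h1
      exact_mod_cast h1
    have hun : ((X ∪ Y).ncard : ℝ) + ((X ∩ Y).ncard : ℝ)
        = (X.ncard : ℝ) + (Y.ncard : ℝ) := by
      exact_mod_cast Set.ncard_union_add_ncard_inter X Y (Set.toFinite _) (Set.toFinite _)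
    have ha0 : (0 : ℝ) ≤ ((X \ Y).ncard : ℝ) := by positivity
    have hy0 : (0 : ℝ) ≤ ((Y \ X).ncard : ℝ) := by positivity
    have hm0 : (0 : ℝ) ≤ (((X ∪ Y)ᶜ).ncard : ℝ) := by positivity
    have hYε : ε * n ≤ (Y.ncard : ℝ) := by nlinarith
    have hWM : ∀ u ∈ X ∩ Y, (G \ H).neighborSet u ⊆ (X ∪ Y)ᶜ := by
      rintro u ⟨huX, huY⟩ v hv
      simp only [Set.mem_compl_iff, Set.mem_union]
      rintro (hvX | hvY)
      · exact hnoadj v hvX u huY hv.symm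
      · exact hnoadj u huX v hvY hv
    by_cases hacase : ε * n ≤ ((X \ Y).ncard : ℝ)
    · -- Case A : X \ Y is large; apply hLB to (X \ Y, Y)
      have hdXY : Disjoint (X \ Y) Y := Set.disjoint_left.mpr fun a ha hay => ha.2 hay
      have h := hLB (X \ Y) Y hdXY hacase hYε (fun s hs t ht => hnoadj s hs.1 t ht)
      nlinarith [mul_nonneg (le_of_lt (by linarith : (0:ℝ) < c - 2))
        (sub_nonneg.mpr hd1), mul_pos hε0 hn0]
    · -- Case B
      push_neg at hacase
      have hdX : Disjoint X (Y \ X) := Set.disjoint_left.mpr fun a ha h => h.2 ha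
      have hyb : ((Y \ X).ncard : ℝ) < ε * n ∨
          (d - ε) * ((Y \ X).ncard : ℝ) ≤ (d / 2 - c * ε) * n := by
        by_cases h : ε * n ≤ ((Y \ X).ncard : ℝ)
        · exact Or.inr (hLB X (Y \ X) hdX hX h (fun s hs t ht => hnoadj s hs t ht.1))
        · exact Or.inl (by linarith)
      have hγ : 2 * ε ≤ 1 / 2 - (c - 2) * ε := by linarith
      have hwε : ε * n ≤ ((X ∩ Y).ncard : ℝ) := by
        rcases hyb with h | h
        · have hγn : 2 * ε * n ≤ (1 / 2 - (c - 2) * ε) * n :=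
            mul_le_mul_of_nonneg_right hγ (le_of_lt hn0)
          linarith
        · have hcoef : d / 2 - c * ε ≤ ((1 / 2 - (c - 2) * ε) - ε) * (d - ε) := by
            nlinarith [mul_nonneg (mul_nonneg (by linarith : (0:ℝ) ≤ c - 1)
              (by linarith : (0:ℝ) ≤ 1 - d)) (le_of_lt hε0),
              mul_nonneg (by linarith : (0:ℝ) ≤ c - 2) (mul_nonneg hε0.le hε0.le),
              mul_pos hε0 hε0]
          have hy2 : (d - ε) * ((Y \ X).ncard : ℝ)
              ≤ (d - ε) * (((1 / 2 - (c - 2) * ε) - ε) * n) := by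
            have := mul_le_mul_of_nonneg_right hcoef (le_of_lt hn0)
            calc (d - ε) * ((Y \ X).ncard : ℝ) ≤ (d / 2 - c * ε) * n := h
              _ ≤ ((1 / 2 - (c - 2) * ε) - ε) * (d - ε) * n := this
              _ = (d - ε) * (((1 / 2 - (c - 2) * ε) - ε) * n) := by ring
          have hy3 : ((Y \ X).ncard : ℝ) ≤ ((1 / 2 - (c - 2) * ε) - ε) * n :=
            le_of_mul_le_mul_left hy2 (by linarith)
          linarith
      have hw0 : (0 : ℝ) < ((X ∩ Y).ncard : ℝ) := lt_of_lt_of_le (by positivity) hwε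
      have hWne : (X ∩ Y).Nonempty := by
        apply Set.nonempty_of_ncard_ne_zero
        exact_mod_cast ne_of_gt hw0
      obtain ⟨u0, hu0⟩ := hWne
      have hm1 : (d / 2 + c * ε) * n ≤ (((X ∪ Y)ᶜ).ncard : ℝ) := by
        refine le_trans (hδ u0) ?_
        exact_mod_cast Nat.cast_le.mpr (Set.ncard_le_ncard (hWM u0 hu0) (Set.toFinite _))
      have hmε : ε * n ≤ (((X ∪ Y)ᶜ).ncard : ℝ) := by nlinarith
      have hm0' : (0 : ℝ) < (((X ∪ Y)ᶜ).ncard : ℝ) := lt_of_lt_of_le (by positivity) hmε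
      have hdWM : Disjoint (X ∩ Y) ((X ∪ Y)ᶜ) :=
        Set.disjoint_left.mpr fun a ha h => h (Or.inl ha.1)
      have hreg := hG.2 (X ∩ Y) ((X ∪ Y)ᶜ) hdWM hwε hmε
      rw [abs_le] at hreg
      have hup : ((edgesBetween G (X ∩ Y) ((X ∪ Y)ᶜ)).ncard : ℝ)
          ≤ (d + ε) * (((X ∩ Y).ncard : ℝ) * (((X ∪ Y)ᶜ).ncard : ℝ)) := by
        have h2 : ((edgesBetween G (X ∩ Y) ((X ∪ Y)ᶜ)).ncard : ℝ)
            / (((X ∩ Y).ncard : ℝ) * (((X ∪ Y)ᶜ).ncard : ℝ)) ≤ d + ε := by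
          linarith [hreg.2]
        rw [div_le_iff₀ (by positivity)] at h2
        linarith
      have hsubG : edgesBetween (G \ H) (X ∩ Y) ((X ∪ Y)ᶜ)
          ⊆ edgesBetween G (X ∩ Y) ((X ∪ Y)ᶜ) := by
        rintro ⟨x, y⟩ ⟨hx, hy, hadj⟩
        exact ⟨hx, hy, hadj.1⟩
      have hlow : ((X ∩ Y).ncard : ℝ) * ((d / 2 + c * ε) * n)
          ≤ ((edgesBetween (G \ H) (X ∩ Y) ((X ∪ Y)ᶜ)).ncard : ℝ) := by
        rw [edgesBetween_ncard]
        push_cast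
        have hterm : ∀ u ∈ (X ∩ Y).toFinite.toFinset,
            (d / 2 + c * ε) * n ≤ (((G \ H).neighborSet u ∩ (X ∪ Y)ᶜ).ncard : ℝ) := by
          intro u hu
          rw [Set.Finite.mem_toFinset] at hu
          rw [Set.inter_eq_left.mpr (hWM u hu)]
          exact hδ u
        calc ((X ∩ Y).ncard : ℝ) * ((d / 2 + c * ε) * n)
            = ((X ∩ Y).toFinite.toFinset.card : ℝ) * ((d / 2 + c * ε) * n) := by
              rw [Set.ncard_eq_toFinset_card (X ∩ Y) (Set.toFinite _)]
          _ ≤ ∑ u ∈ (X ∩ Y).toFinite.toFinset,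
              (((G \ H).neighborSet u ∩ (X ∪ Y)ᶜ).ncard : ℝ) := by
              have := Finset.card_nsmul_le_sum (X ∩ Y).toFinite.toFinset
                (fun u => (((G \ H).neighborSet u ∩ (X ∪ Y)ᶜ).ncard : ℝ))
                ((d / 2 + c * ε) * n) hterm
              rwa [nsmul_eq_mul] at this
      have hmono2 : ((edgesBetween (G \ H) (X ∩ Y) ((X ∪ Y)ᶜ)).ncard : ℝ)
          ≤ ((edgesBetween G (X ∩ Y) ((X ∪ Y)ᶜ)).ncard : ℝ) :=
        Nat.cast_le.mpr (Set.ncard_le_ncard hsubG (Set.toFinite _))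
      have hm2 : (d / 2 + c * ε) * n ≤ (d + ε) * (((X ∪ Y)ᶜ).ncard : ℝ) := by
        have h5 : ((X ∩ Y).ncard : ℝ) * ((d / 2 + c * ε) * n)
            ≤ ((X ∩ Y).ncard : ℝ) * ((d + ε) * (((X ∪ Y)ᶜ).ncard : ℝ)) := by nlinarith
        exact le_of_mul_le_mul_left (by linarith [h5]) hw0
      -- final contradiction
      nlinarith [mul_nonneg (le_of_lt (by linarith : (0:ℝ) < c - 2))
        (sub_nonneg.mpr hd1), mul_pos hε0 hn0, mul_nonneg hm0 (sub_nonneg.mpr hd1)]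
  -- expansion statement
  have hexp : ∀ X : Set (Fin n), ε * n ≤ (X.ncard : ℝ) →
      (1 / 2 + (c - 2) * ε) * n ≤ ((nbhd (G \ H) X).ncard : ℝ) := by
    intro X hX
    by_contra hcon
    push_neg at hcon
    have hNY : ((nbhd (G \ H) X).ncard : ℝ) + (((nbhd (G \ H) X)ᶜ).ncard : ℝ) = n := by
      have h1 := Set.ncard_add_ncard_compl (nbhd (G \ H) X) (Set.toFinite _) (Set.toFinite _)
      have h3 : Nat.card (Fin n) = n := by simp
      rw [h3] at h1
      exact_mod_cast h1
    refine key X ((nbhd (G \ H) X)ᶜ) ?_ hX (by linarith)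
    intro x hx y hy hadj
    exact hy ⟨x, hx, hadj⟩
  refine ⟨?_, hexp⟩
  -- connectivity
  have hN1 : ∀ u, nbhd (G \ H) {u} = (G \ H).neighborSet u := by
    intro u; ext v; simp [nbhd]
  have hne : ∀ u : Fin n, ε * n ≤ ((nbhd (G \ H) {u}).ncard : ℝ) := by
    intro u
    rw [hN1]
    refine le_trans ?_ (hδ u)
    have : ε ≤ d / 2 + c * ε := by nlinarith
    exact mul_le_mul_of_nonneg_right this (le_of_lt hn0)
  have hbig : ∀ u : Fin n,
      (1 / 2 + (c - 2) * ε) * n ≤ ((nbhd (G \ H) (nbhd (G \ H) {u})).ncard : ℝ) :=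
    fun u => hexp _ (hne u)
  have hreach : ∀ u v : Fin n, (G \ H).Reachable u v := by
    intro u v
    have hinter : (nbhd (G \ H) (nbhd (G \ H) {u}) ∩ nbhd (G \ H) (nbhd (G \ H) {v})).Nonempty := by
      apply Set.nonempty_of_ncard_ne_zero
      have h1 := hbig u
      have h2 := hbig v
      have h3 : ((nbhd (G \ H) (nbhd (G \ H) {u}) ∪ nbhd (G \ H) (nbhd (G \ H) {v})).ncard : ℝ)
          ≤ n := by
        have := Set.ncard_le_ncard (Set.subset_univ
          (nbhd (G \ H) (nbhd (G \ H) {u}) ∪ nbhd (G \ H) (nbhd (G \ H) {v}))) (Set.toFinite _)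
        rw [Set.ncard_univ] at this
        simp only [Nat.card_eq_fintype_card, Fintype.card_fin] at this
        exact_mod_cast this
      have h4 : ((nbhd (G \ H) (nbhd (G \ H) {u}) ∪ nbhd (G \ H) (nbhd (G \ H) {v})).ncard : ℝ)
          + ((nbhd (G \ H) (nbhd (G \ H) {u}) ∩ nbhd (G \ H) (nbhd (G \ H) {v})).ncard : ℝ)
          = ((nbhd (G \ H) (nbhd (G \ H) {u})).ncard : ℝ)
          + ((nbhd (G \ H) (nbhd (G \ H) {v})).ncard : ℝ) := by
        exact_mod_cast Set.ncard_union_add_ncard_inter _ _ (Set.toFinite _) (Set.toFinite _)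
      have h5 : (0 : ℝ)
          < ((nbhd (G \ H) (nbhd (G \ H) {u}) ∩ nbhd (G \ H) (nbhd (G \ H) {v})).ncard : ℝ) := by
        nlinarith [mul_pos (mul_pos (by linarith : (0:ℝ) < c - 2) hε0) hn0]
      exact_mod_cast ne_of_gt h5
    obtain ⟨p, hp1, hp2⟩ := hinter
    have hr : ∀ z : Fin n, p ∈ nbhd (G \ H) (nbhd (G \ H) {z}) → (G \ H).Reachable z p := by
      intro z hz
      obtain ⟨x, hx, hadj2⟩ := hz
      obtain ⟨z', hz', hadj1⟩ := hx
      rw [Set.mem_singleton_iff] at hz'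
      subst hz'
      exact (hadj1.reachable).trans hadj2.reachable
    exact (hr u hp1).trans (hr v hp2).symm
  rw [SimpleGraph.connected_iff]
  exact ⟨hreach, ⟨⟨0, hn⟩⟩⟩
end

section
/- If p = p(n) ≥ (log n)⁴ / n, then almost surely in G(n,p): for every a and b with b ≤ min(a·np/15, n/15), and every two disjoint vertex subsets A, B with |A| = a and |B| = b, the number of edges between A and B is less than a·np/2. -/
open MeasureTheory Filter
open scoped ENNReal

/-- The product Bernoulli measure on potential edges of a graph on `Fin n`,
modelling the Erdős–Rényi random graph `G(n,p)`. -/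
noncomputable def erMeasure (n : ℕ) (p : ℝ) :
    Measure ({e : Sym2 (Fin n) // ¬ e.IsDiag} → Bool) :=
  Measure.pi fun _ => (PMF.bernoulli (min (Real.toNNReal p) 1) (min_le_right _ _)).toMeasure

/-- The graph on `Fin n` determined by a choice of edges. -/
def erGraph {n : ℕ} (ω : {e : Sym2 (Fin n) // ¬ e.IsDiag} → Bool) : SimpleGraph (Fin n) :=
  SimpleGraph.fromEdgeSet {e | ∃ h : ¬ e.IsDiag, ω ⟨e, h⟩ = true}

open Finset

abbrev EI (n : ℕ) := {e : Sym2 (Fin n) // ¬ e.IsDiag}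

instance (n : ℕ) (p : ℝ) : IsProbabilityMeasure (erMeasure n p) := by
  unfold erMeasure; infer_instance

attribute [local instance] Classical.propDecidable

lemma measure_cyl (n : ℕ) (p : ℝ) (hp1 : p ≤ 1) (T : Finset (EI n)) :
    erMeasure n p {ω | ∀ i ∈ T, ω i = true} = ENNReal.ofReal p ^ T.card := by
  have hmin : min (Real.toNNReal p) 1 = Real.toNNReal p :=
    min_eq_left (Real.toNNReal_le_one.2 hp1)
  have hset : {ω : EI n → Bool | ∀ i ∈ T, ω i = true} =
      Set.pi Set.univ (fun i => if i ∈ T then {true} else Set.univ) := by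
    ext ω
    simp only [Set.mem_setOf_eq, Set.mem_pi, Set.mem_univ, true_implies]
    constructor
    · intro h i
      by_cases hi : i ∈ T <;> simp [hi, h i]
    · intro h i hi
      have := h i
      simpa [hi] using this
  rw [hset, erMeasure, Measure.pi_pi]
  have hone : ∀ i : EI n,
      (PMF.bernoulli (min (Real.toNNReal p) 1) (min_le_right _ _)).toMeasure
        (if i ∈ T then ({true} : Set Bool) else Set.univ)
      = if i ∈ T then ENNReal.ofReal p else 1 := by
    intro i
    by_cases hi : i ∈ T
    · simp only [hi, if_true]
      rw [PMF.toMeasure_apply_singleton _ _ (measurableSet_singleton _),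
        PMF.bernoulli_apply, hmin]
      rfl
    · simp only [hi, if_false]; exact measure_univ
  simp_rw [hone]
  rw [Finset.prod_ite_mem, Finset.univ_inter, Finset.prod_const]


lemma measure_event_le (n : ℕ) (p : ℝ) (hp0 : 0 ≤ p) (hp1 : p ≤ 1)
    (A B : Finset (Fin n)) (hAB : Disjoint (A : Set (Fin n)) (B : Set (Fin n))) (k : ℕ) :
    erMeasure n p {ω | k ≤ (edgesBetween (erGraph ω) ↑A ↑B).ncard} ≤
      ((A.card * B.card).choose k : ℝ≥0∞) * ENNReal.ofReal p ^ k := by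
  classical
  set S : Finset (EI n) :=
    Finset.univ.filter (fun i : EI n => ∃ x ∈ A, ∃ y ∈ B, i.1 = s(x, y)) with hS
  -- card bound
  have hScard : S.card ≤ A.card * B.card := by
    have h1 : S.card ≤ ((A ×ˢ B).image (fun xy : Fin n × Fin n => Sym2.mk xy.1 xy.2)).card := by
      apply Finset.card_le_card_of_injOn Subtype.val
      · intro i hi
        simp only [hS, Finset.mem_coe, Finset.mem_filter, Finset.mem_univ, true_and] at hi
        obtain ⟨x, hx, y, hy, hxy⟩ := hi
        simp only [Finset.mem_coe, Finset.mem_image, Finset.mem_product]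
        exact ⟨(x, y), ⟨hx, hy⟩, hxy.symm⟩
      · exact Subtype.val_injective.injOn
    calc S.card ≤ _ := h1
      _ ≤ (A ×ˢ B).card := Finset.card_image_le
      _ = A.card * B.card := Finset.card_product A B
  -- inclusion into union of cylinders
  have hsub : {ω : EI n → Bool | k ≤ (edgesBetween (erGraph ω) ↑A ↑B).ncard} ⊆
      ⋃ T ∈ S.powersetCard k, {ω : EI n → Bool | ∀ i ∈ T, ω i = true} := by
    intro ω hω
    set U : Finset (EI n) := S.filter (fun i => ω i = true) with hU
    have hkU : k ≤ U.card := by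
      refine le_trans hω ?_
      have hmaps : ∀ z ∈ edgesBetween (erGraph ω) (↑A) (↑B),
          (fun xy : Fin n × Fin n => Sym2.mk xy.1 xy.2) z ∈ ((U.image Subtype.val : Finset (Sym2 (Fin n))) : Set (Sym2 (Fin n))) := by
        rintro ⟨x, y⟩ ⟨hx, hy, hadj⟩
        rw [erGraph, SimpleGraph.fromEdgeSet_adj] at hadj
        obtain ⟨⟨hd, hω'⟩, -⟩ := hadj
        simp only [Finset.coe_image, Set.mem_image, Finset.mem_coe]
        refine ⟨⟨s(x, y), hd⟩, ?_, rfl⟩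
        simp only [hU, hS, Finset.mem_filter, Finset.mem_univ, true_and]
        exact ⟨⟨x, hx, y, hy, rfl⟩, hω'⟩
      have hinj : Set.InjOn (fun xy : Fin n × Fin n => Sym2.mk xy.1 xy.2)
          (edgesBetween (erGraph ω) (↑A) (↑B)) := by
        rintro ⟨x, y⟩ ⟨hx, hy, -⟩ ⟨x', y'⟩ ⟨hx', hy', -⟩ hxy
        simp only [Sym2.eq_iff] at hxy
        rcases hxy with ⟨rfl, rfl⟩ | ⟨rfl, rfl⟩
        · rfl
        · exact absurd hy' (Set.disjoint_left.1 hAB hx)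
      have := Set.ncard_le_ncard_of_injOn _ hmaps hinj (Set.toFinite _)
      rw [Set.ncard_coe_finset, Finset.card_image_of_injective _ Subtype.val_injective] at this
      exact this
    obtain ⟨T, hTU, hTcard⟩ := Finset.exists_subset_card_eq hkU
    refine Set.mem_iUnion₂.2 ⟨T, ?_, ?_⟩
    · exact Finset.mem_powersetCard.2 ⟨hTU.trans (Finset.filter_subset _ _), hTcard⟩
    · intro i hi
      exact (Finset.mem_filter.1 (hTU hi)).2
  calc erMeasure n p {ω | k ≤ (edgesBetween (erGraph ω) ↑A ↑B).ncard}
      ≤ erMeasure n p (⋃ T ∈ S.powersetCard k, {ω : EI n → Bool | ∀ i ∈ T, ω i = true}) :=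
        measure_mono hsub
    _ ≤ ∑ T ∈ S.powersetCard k, erMeasure n p {ω : EI n → Bool | ∀ i ∈ T, ω i = true} :=
        measure_biUnion_finset_le _ _
    _ = ∑ T ∈ S.powersetCard k, ENNReal.ofReal p ^ T.card := by
        refine Finset.sum_congr rfl fun T hT => measure_cyl n p hp1 T
    _ = ∑ T ∈ S.powersetCard k, ENNReal.ofReal p ^ k := by
        refine Finset.sum_congr rfl fun T hT => by
          rw [(Finset.mem_powersetCard.1 hT).2]
    _ = (S.card.choose k : ℝ≥0∞) * ENNReal.ofReal p ^ k := by
        rw [Finset.sum_const, Finset.card_powersetCard, nsmul_eq_mul]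
    _ ≤ ((A.card * B.card).choose k : ℝ≥0∞) * ENNReal.ofReal p ^ k := by
        gcongr


lemma logineq (a b k np L lb lq : ℝ)
    (ha : 1 ≤ a) (hb : 1 ≤ b)
    (hL : 2.77 ≤ L)
    (hP : L ^ 4 ≤ np)
    (hb1 : 15 * b ≤ a * np)
    (hk : a * np / 2 ≤ k)
    (hlq : lq = Real.log 2 + 1 + lb - L)
    (hlq1 : lq ≤ -1)
    (hlb : Real.log 2 + 2 ≤ L - lb)
    (hlog2 : Real.log 2 ≤ 1) (hlog2' : 0 ≤ Real.log 2) :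
    a * L + b * (1 + L - lb) + k * lq ≤ -(L ^ 4) / 20 := by
  have ha0 : (0:ℝ) ≤ a := by linarith
  have hb0 : (0:ℝ) ≤ b := by linarith
  have hnp0 : (0:ℝ) ≤ np := by nlinarith
  have hc3 : a * np / 10 + 6 * b ≤ k := by linarith
  have step1 : k * lq ≤ (a * np / 10 + 6 * b) * lq :=
    mul_le_mul_of_nonpos_right hc3 (by linarith)
  have step2 : (a * np / 10) * lq ≤ -(a * np / 10) := by nlinarith
  have bpart : b * (1 + L - lb) + (6 * b) * lq ≤ 0 := by
    have h1 : (1 + L - lb) + 6 * lq ≤ 0 := by rw [hlq]; nlinarith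
    nlinarith
  have apart : a * L - a * np / 10 ≤ -(L ^ 4) / 20 := by
    have hL3 : 20 ≤ L ^ 3 := by nlinarith [sq_nonneg (L - 2.77), sq_nonneg L]
    have hL4 : 20 * L ≤ L ^ 4 := by nlinarith
    have h2 : L - L ^ 4 / 10 ≤ -(L ^ 4) / 20 := by linarith
    have h3 : a * L - a * np / 10 ≤ a * (L - L ^ 4 / 10) := by nlinarith
    have h4 : a * (L - L ^ 4 / 10) ≤ 1 * (L - L ^ 4 / 10) :=
      mul_le_mul_of_nonpos_right ha (by linarith)
    linarith
  have expand : (a * np / 10 + 6 * b) * lq = (a * np / 10) * lq + (6 * b) * lq := by ring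
  linarith


lemma fact_lb (m : ℕ) : ((m : ℝ) / Real.exp 1) ^ m ≤ (m.factorial : ℝ) := by
  have h := Real.pow_div_factorial_le_exp (x := (m : ℝ)) (Nat.cast_nonneg m) m
  have hf : (0:ℝ) < m.factorial := by exact_mod_cast m.factorial_pos
  rw [div_le_iff₀ hf] at h
  rw [div_pow, div_le_iff₀ (by positivity)]
  rw [← Real.exp_one_pow] at h
  linarith [h]


set_option maxHeartbeats 1600000 in
lemma numeric (n a b k : ℕ) (p : ℝ) (hn : 16 ≤ n) (hp0 : 0 ≤ p)
    (hP : (Real.log n) ^ 4 ≤ n * p) (ha : 1 ≤ a) (hb : 1 ≤ b)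
    (hb1 : (b : ℝ) ≤ a * ((n : ℝ) * p) / 15) (hb2 : (b : ℝ) ≤ (n : ℝ) / 15)
    (hk : (a * ((n : ℝ) * p) / 2 : ℝ) ≤ k) :
    (n.choose a : ℝ) * (n.choose b) * ((a * b).choose k) * p ^ k ≤
      Real.exp (-((Real.log n) ^ 4) / 20) := by
  have hn0 : (0:ℝ) < n := by
    have : (16:ℝ) ≤ n := by exact_mod_cast hn
    linarith
  set L := Real.log n with hLdef
  have hlog2lt : Real.log 2 < 0.6931471808 := Real.log_two_lt_d9
  have hlog2gt : 0.6931471803 < Real.log 2 := Real.log_two_gt_d9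
  have hL : 2.77 ≤ L := by
    have h16 : Real.log 16 ≤ L := Real.log_le_log (by norm_num) (by exact_mod_cast hn)
    have h16' : Real.log 16 = 4 * Real.log 2 := by
      rw [show (16:ℝ) = 2 ^ 4 by norm_num, Real.log_pow]; push_cast; ring
    linarith
  have hL0 : (0:ℝ) < L := by linarith
  have hnp0 : (0:ℝ) < (n:ℝ) * p := lt_of_lt_of_le (by positivity) hP
  have hp_pos : 0 < p := by
    rcases lt_or_ge 0 p with h | h
    · exact h
    · exfalso; nlinarith
  have ha0 : (1:ℝ) ≤ (a:ℝ) := by exact_mod_cast ha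
  have hb0 : (1:ℝ) ≤ (b:ℝ) := by exact_mod_cast hb
  have hbpos : (0:ℝ) < b := by linarith
  have hapos : (0:ℝ) < a := by linarith
  have hkpos : (0:ℝ) < k := lt_of_lt_of_le (by positivity) hk
  have he : Real.exp 1 < 2.7182818286 := Real.exp_one_lt_d9
  have he0 : (0:ℝ) < Real.exp 1 := Real.exp_pos 1
  set e := Real.exp 1 with hedef
  set q : ℝ := 2 * e * b / n with hqdef
  have hq0 : 0 < q := by positivity
  -- factor bounds
  have F1 : (n.choose a : ℝ) ≤ (n:ℝ) ^ a := by exact_mod_cast Nat.choose_le_pow n a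
  have hB : (n.choose b : ℝ) ≤ (e * n / b) ^ b := by
    have F2 : (n.choose b : ℝ) ≤ (n:ℝ) ^ b / (b.factorial : ℝ) := Nat.choose_le_pow_div b n
    have hf : (0:ℝ) < b.factorial := by exact_mod_cast b.factorial_pos
    have heq : ((e * n / b) * ((b:ℝ) / e)) ^ b = (n:ℝ) ^ b := by
      congr 1; field_simp
    have h2 : (n:ℝ) ^ b ≤ (e * n / b) ^ b * (b.factorial : ℝ) := by
      rw [← heq, mul_pow]
      exact mul_le_mul_of_nonneg_left (fact_lb b) (by positivity)
    have h3 : (n:ℝ) ^ b / (b.factorial : ℝ) ≤ (e * n / b) ^ b := by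
      rw [div_le_iff₀ hf]; exact h2
    exact F2.trans h3
  have hC : ((a * b).choose k : ℝ) * p ^ k ≤ q ^ k := by
    have F3 : ((a * b).choose k : ℝ) ≤ ((a:ℝ) * b) ^ k / (k.factorial : ℝ) := by
      have := Nat.choose_le_pow_div (α := ℝ) k (a * b)
      rwa [Nat.cast_mul] at this
    have hf : (0:ℝ) < k.factorial := by exact_mod_cast k.factorial_pos
    have step1 : ((a:ℝ) * b) ^ k * p ^ k ≤ (e * a * b * p / k) ^ k * (k.factorial : ℝ) := by
      have heq : ((e * a * b * p / k) * ((k:ℝ) / e)) ^ k = ((a:ℝ) * b * p) ^ k := by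
        congr 1; field_simp
      calc ((a:ℝ) * b) ^ k * p ^ k = ((a:ℝ) * b * p) ^ k := by rw [← mul_pow]
        _ = (e * a * b * p / k) ^ k * ((k:ℝ) / e) ^ k := by rw [← heq, mul_pow]
        _ ≤ (e * a * b * p / k) ^ k * (k.factorial : ℝ) :=
            mul_le_mul_of_nonneg_left (fact_lb k) (by positivity)
    have step2 : (e * a * b * p / k) ^ k ≤ q ^ k := by
      apply pow_le_pow_left₀ (by positivity)
      rw [div_le_iff₀ hkpos]
      calc e * a * b * p = (2 * e * b / n) * (a * ((n:ℝ) * p) / 2) := by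
            field_simp
        _ ≤ (2 * e * b / n) * k := mul_le_mul_of_nonneg_left hk (by positivity)
        _ = q * k := by rw [hqdef]
    calc ((a * b).choose k : ℝ) * p ^ k
        ≤ (((a:ℝ) * b) ^ k / (k.factorial : ℝ)) * p ^ k := by
          exact mul_le_mul_of_nonneg_right F3 (by positivity)
      _ = ((a:ℝ) * b) ^ k * p ^ k / (k.factorial : ℝ) := by ring
      _ ≤ (e * a * b * p / k) ^ k := by rw [div_le_iff₀ hf]; exact step1
      _ ≤ q ^ k := step2
  have key : (n.choose a : ℝ) * (n.choose b) * ((a * b).choose k) * p ^ k ≤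
      (n:ℝ) ^ a * (e * n / b) ^ b * q ^ k := by
    have h1 : (n.choose a : ℝ) * (n.choose b) ≤ (n:ℝ) ^ a * (e * n / b) ^ b :=
      mul_le_mul F1 hB (by positivity) (by positivity)
    calc (n.choose a : ℝ) * (n.choose b) * ((a * b).choose k) * p ^ k
        = ((n.choose a : ℝ) * (n.choose b)) * (((a * b).choose k : ℝ) * p ^ k) := by ring
      _ ≤ ((n:ℝ) ^ a * (e * n / b) ^ b) * (q ^ k) :=
          mul_le_mul h1 hC (by positivity) (by positivity)
  -- rewrite as exponentials
  set lb := Real.log b with hlbdef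
  set lq := Real.log q with hlqdef
  have E1 : (n:ℝ) ^ a = Real.exp ((a:ℝ) * L) := by
    rw [Real.exp_nat_mul, Real.exp_log hn0]
  have E2 : (e * n / b) ^ b = Real.exp ((b:ℝ) * (1 + L - lb)) := by
    rw [Real.exp_nat_mul]
    congr 1
    rw [Real.exp_sub, Real.exp_add, Real.exp_log hn0, Real.exp_log hbpos, hedef]
  have E3 : q ^ k = Real.exp ((k:ℝ) * lq) := by
    rw [Real.exp_nat_mul, Real.exp_log hq0]
  -- log identities and bounds
  have hlq_eq : lq = Real.log 2 + 1 + lb - L := by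
    rw [hlqdef, hqdef, Real.log_div (by positivity) (ne_of_gt hn0),
      Real.log_mul (by positivity) (ne_of_gt hbpos),
      Real.log_mul (by norm_num) (ne_of_gt he0), hedef, Real.log_exp]
  have h2e2 : 2 * e * e ≤ 15 := by nlinarith [he, he0]
  have hq_le : q ≤ Real.exp (-1) := by
    have h15b : 15 * (b:ℝ) ≤ (n:ℝ) := by linarith
    have h1 : q ≤ 2 * e / 15 := by
      rw [hqdef, div_le_div_iff₀ hn0 (by norm_num : (0:ℝ) < 15)]
      have := mul_le_mul_of_nonneg_left h15b (le_of_lt he0)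
      linarith
    have h2 : 2 * e / 15 ≤ Real.exp (-1) := by
      rw [Real.exp_neg, ← hedef, inv_eq_one_div, div_le_div_iff₀ (by norm_num : (0:ℝ) < 15) he0]
      linarith [h2e2]
    exact h1.trans h2
  have hlq1 : lq ≤ -1 := by
    have h := Real.log_le_log hq0 hq_le
    rwa [Real.log_exp] at h
  have hlb_ineq : Real.log 2 + 2 ≤ L - lb := by
    have h15 : (15:ℝ) ≤ (n:ℝ) / b := by
      rw [le_div_iff₀ hbpos]; linarith
    have h2e2' : 2 * e * e ≤ (n:ℝ) / b := h2e2.trans h15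
    have hlog := Real.log_le_log (by positivity) h2e2'
    rw [Real.log_div (ne_of_gt hn0) (ne_of_gt hbpos)] at hlog
    rw [Real.log_mul (by positivity) (ne_of_gt he0),
      Real.log_mul (by norm_num) (ne_of_gt he0), hedef, Real.log_exp] at hlog
    linarith
  calc (n.choose a : ℝ) * (n.choose b) * ((a * b).choose k) * p ^ k
      ≤ (n:ℝ) ^ a * (e * n / b) ^ b * q ^ k := key
    _ = Real.exp ((a:ℝ) * L + (b:ℝ) * (1 + L - lb) + (k:ℝ) * lq) := by
        rw [E1, E2, E3, ← Real.exp_add, ← Real.exp_add]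
    _ ≤ Real.exp (-(L ^ 4) / 20) := by
        apply Real.exp_le_exp.2
        exact logineq (a:ℝ) (b:ℝ) (k:ℝ) ((n:ℝ) * p) L lb lq ha0 hb0 hL hP
          (by linarith) hk hlq_eq hlq1 hlb_ineq (by linarith) (by linarith)


set_option maxHeartbeats 2000000 in
lemma main_bound (n : ℕ) (p : ℝ) (hn : 16 ≤ n) (hp0 : 0 ≤ p) (hp1 : p ≤ 1)
    (hP : (Real.log n) ^ 4 ≤ n * p) :
    erMeasure n p {ω | ∀ A B : Set (Fin n), A.Nonempty → Disjoint A B →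
          (B.ncard : ℝ) ≤ min (A.ncard * (n * p) / 15) (n / 15) →
          ((edgesBetween (erGraph ω) A B).ncard : ℝ) < A.ncard * (n * p) / 2}ᶜ ≤
      ENNReal.ofReal ((((n : ℝ) + 1)) ^ 2 * Real.exp (-((Real.log n) ^ 4) / 20)) := by
  classical
  have hn0 : (0:ℝ) < n := by
    have : (16:ℝ) ≤ n := by exact_mod_cast hn
    linarith
  have hL : (0:ℝ) < Real.log n := Real.log_pos (by
    have : (16:ℝ) ≤ n := by exact_mod_cast hn
    linarith)
  have hnp0 : (0:ℝ) < (n:ℝ) * p := lt_of_lt_of_le (by positivity) hP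
  set kk : ℕ → ℕ := fun a => ⌈((a:ℝ) * ((n:ℝ) * p) / 2)⌉₊ with hkk
  set F : Finset (Fin n) × Finset (Fin n) → Set (EI n → Bool) := fun AB =>
    {ω | AB.1.Nonempty ∧ Disjoint (AB.1 : Set (Fin n)) (AB.2 : Set (Fin n)) ∧
      ((AB.2.card : ℝ) ≤ min ((AB.1.card : ℝ) * ((n:ℝ) * p) / 15) ((n:ℝ) / 15)) ∧
      kk AB.1.card ≤ (edgesBetween (erGraph ω) ↑AB.1 ↑AB.2).ncard} with hF
  -- inclusion of the bad event into the union
  have hsub : {ω : EI n → Bool | ∀ A B : Set (Fin n), A.Nonempty → Disjoint A B →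
          (B.ncard : ℝ) ≤ min (A.ncard * (n * p) / 15) (n / 15) →
          ((edgesBetween (erGraph ω) A B).ncard : ℝ) < A.ncard * (n * p) / 2}ᶜ ⊆
      ⋃ AB, F AB := by
    intro ω hω
    simp only [Set.mem_compl_iff, Set.mem_setOf_eq] at hω
    push_neg at hω
    obtain ⟨A, B, hA, hAB, hcond, hge⟩ := hω
    refine Set.mem_iUnion.2 ⟨(A.toFinite.toFinset, B.toFinite.toFinset), ?_, ?_, ?_, ?_⟩
    · exact A.toFinite.toFinset_nonempty.2 hA
    · rw [A.toFinite.coe_toFinset, B.toFinite.coe_toFinset]; exact hAB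
    · rw [← Set.ncard_eq_toFinset_card A A.toFinite, ← Set.ncard_eq_toFinset_card B B.toFinite]
      exact hcond
    · rw [A.toFinite.coe_toFinset, B.toFinite.coe_toFinset,
        ← Set.ncard_eq_toFinset_card A A.toFinite]
      exact Nat.ceil_le.2 hge
  -- the real-valued bound for a single pair
  set g : ℕ → ℕ → ℝ := fun a b =>
    if 1 ≤ a ∧ 1 ≤ b ∧ ((b : ℝ) ≤ min ((a:ℝ) * ((n:ℝ) * p) / 15) ((n:ℝ) / 15))
    then (((a * b).choose (kk a) : ℕ) : ℝ) * p ^ (kk a) else 0 with hg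
  have hgnonneg : ∀ a b, 0 ≤ g a b := by
    intro a b
    rw [hg]
    dsimp only
    split
    · positivity
    · exact le_refl 0
  have hFbound : ∀ AB : Finset (Fin n) × Finset (Fin n),
      erMeasure n p (F AB) ≤ ENNReal.ofReal (g AB.1.card AB.2.card) := by
    rintro ⟨A, B⟩
    by_cases hc : 1 ≤ A.card ∧ 1 ≤ B.card ∧
        ((B.card : ℝ) ≤ min ((A.card:ℝ) * ((n:ℝ) * p) / 15) ((n:ℝ) / 15))
    · have hgeq : g A.card B.card = (((A.card * B.card).choose (kk A.card) : ℕ) : ℝ) *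
          p ^ (kk A.card) := if_pos hc
      rw [hgeq]
      by_cases hd : Disjoint (A : Set (Fin n)) (B : Set (Fin n))
      · refine le_trans (measure_mono ?_)
          (le_trans (measure_event_le n p hp0 hp1 A B hd (kk A.card)) ?_)
        · rintro ω ⟨-, -, -, h4⟩; exact h4
        · rw [ENNReal.ofReal_mul (by positivity), ENNReal.ofReal_pow hp0,
            ENNReal.ofReal_natCast]
      · have hFe : F (A, B) = ∅ := by
          rw [Set.eq_empty_iff_forall_notMem]
          rintro ω ⟨-, h2, -, -⟩
          exact hd h2
        rw [hFe, measure_empty]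
        exact zero_le
    · have hFe : F (A, B) = ∅ := by
        rw [Set.eq_empty_iff_forall_notMem]
        rintro ω ⟨h1, h2, h3, h4⟩
        apply hc
        refine ⟨Finset.card_pos.2 h1, ?_, h3⟩
        by_contra hb
        have hb0 : B = ∅ := Finset.card_eq_zero.1 (by omega)
        have hee : edgesBetween (erGraph ω) (↑A) (↑(∅ : Finset (Fin n))) = ∅ := by
          ext x; simp [edgesBetween]
        rw [hb0, hee] at h4
        have hkpos : 0 < kk A.card := Nat.ceil_pos.2 (by
          have h1' : (1:ℝ) ≤ A.card := by exact_mod_cast Finset.card_pos.2 h1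
          positivity)
        simp only [Set.ncard_empty] at h4
        omega
      rw [hFe, measure_empty]
      exact zero_le
  -- union bound and counting
  calc erMeasure n p _ᶜ ≤ erMeasure n p (⋃ AB, F AB) := measure_mono hsub
    _ ≤ ∑' AB, erMeasure n p (F AB) := measure_iUnion_le F
    _ = ∑ AB : Finset (Fin n) × Finset (Fin n), erMeasure n p (F AB) := tsum_fintype _
    _ ≤ ∑ AB : Finset (Fin n) × Finset (Fin n), ENNReal.ofReal (g AB.1.card AB.2.card) :=
        Finset.sum_le_sum fun AB _ => hFbound AB
    _ = ENNReal.ofReal (∑ AB : Finset (Fin n) × Finset (Fin n), g AB.1.card AB.2.card) :=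
        (ENNReal.ofReal_sum_of_nonneg fun AB _ => hgnonneg _ _).symm
    _ ≤ ENNReal.ofReal ((((n : ℝ) + 1)) ^ 2 * Real.exp (-((Real.log n) ^ 4) / 20)) := by
        apply ENNReal.ofReal_le_ofReal
        -- regroup the sum by cardinalities
        have hsum1 : ∀ h : ℕ → ℝ, ∑ A : Finset (Fin n), h A.card =
            ∑ a ∈ Finset.range (n + 1), (n.choose a : ℝ) * h a := by
          intro h
          rw [← Finset.powerset_univ, Finset.sum_powerset_apply_card]
          simp [Finset.card_univ, nsmul_eq_mul]
        have hregroup : (∑ AB : Finset (Fin n) × Finset (Fin n), g AB.1.card AB.2.card) =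
            ∑ a ∈ Finset.range (n + 1), ∑ b ∈ Finset.range (n + 1),
              (n.choose a : ℝ) * (n.choose b) * g a b := by
          rw [Fintype.sum_prod_type]
          calc (∑ A : Finset (Fin n), ∑ B : Finset (Fin n), g A.card B.card)
              = ∑ a ∈ Finset.range (n + 1), (n.choose a : ℝ) *
                  ∑ B : Finset (Fin n), g a B.card := hsum1 (fun a => ∑ B : Finset (Fin n), g a B.card)
            _ = ∑ a ∈ Finset.range (n + 1), (n.choose a : ℝ) *
                  ∑ b ∈ Finset.range (n + 1), (n.choose b : ℝ) * g a b := by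
                refine Finset.sum_congr rfl fun a _ => ?_
                rw [hsum1 (fun b => g a b)]
            _ = _ := by
                refine Finset.sum_congr rfl fun a _ => ?_
                rw [Finset.mul_sum]
                exact Finset.sum_congr rfl fun b _ => (mul_assoc _ _ _).symm
        rw [hregroup]
        have hterm : ∀ a b : ℕ, (n.choose a : ℝ) * (n.choose b) * g a b ≤
            Real.exp (-((Real.log n) ^ 4) / 20) := by
          intro a b
          by_cases hc : 1 ≤ a ∧ 1 ≤ b ∧ ((b : ℝ) ≤ min ((a:ℝ) * ((n:ℝ) * p) / 15) ((n:ℝ) / 15))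
          · obtain ⟨ha, hb, hbmin⟩ := hc
            rw [le_min_iff] at hbmin
            have hnum := numeric n a b (kk a) p hn hp0 hP ha hb hbmin.1 hbmin.2 (Nat.le_ceil _)
            calc (n.choose a : ℝ) * (n.choose b) * g a b
                = (n.choose a : ℝ) * (n.choose b) * ((a * b).choose (kk a)) * p ^ (kk a) := by
                  rw [hg]; dsimp only
                  rw [if_pos ⟨ha, hb, le_min_iff.2 hbmin⟩]; ring
              _ ≤ _ := hnum
          · have : g a b = 0 := by rw [hg]; exact if_neg hc
            rw [this, mul_zero]
            positivity
        calc (∑ a ∈ Finset.range (n + 1), ∑ b ∈ Finset.range (n + 1),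
              (n.choose a : ℝ) * (n.choose b) * g a b)
            ≤ ∑ _a ∈ Finset.range (n + 1), ∑ _b ∈ Finset.range (n + 1),
              Real.exp (-((Real.log n) ^ 4) / 20) :=
              Finset.sum_le_sum fun a _ => Finset.sum_le_sum fun b _ => hterm a b
          _ = (((n : ℝ) + 1)) ^ 2 * Real.exp (-((Real.log n) ^ 4) / 20) := by
              rw [Finset.sum_const, Finset.sum_const, Finset.card_range, nsmul_eq_mul,
                nsmul_eq_mul]
              push_cast; ring

/-- If `p ≥ (log n)⁴ / n`, then a.s. in `G(n,p)` every two disjoint nonempty sets `A`, `B`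
with `|A| = a` and `|B| = b ≤ min (a np/15) (n/15)` satisfy `e(A,B) < a np / 2`. -/
theorem edges_between_small_sets (p : ℕ → ℝ)
    (hp0 : ∀ n : ℕ, 0 ≤ p n) (hp1 : ∀ n : ℕ, p n ≤ 1)
    (hp : ∀ n : ℕ, (Real.log n) ^ 4 / n ≤ p n) :
    Tendsto
      (fun n : ℕ => erMeasure n (p n)
        {ω | ∀ A B : Set (Fin n), A.Nonempty → Disjoint A B →
          (B.ncard : ℝ) ≤ min (A.ncard * (n * p n) / 15) (n / 15) →
          ((edgesBetween (erGraph ω) A B).ncard : ℝ) < A.ncard * (n * p n) / 2})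
      atTop (nhds 1) := by
  set f : ℕ → ℝ≥0∞ := fun n => erMeasure n (p n)
        {ω | ∀ A B : Set (Fin n), A.Nonempty → Disjoint A B →
          (B.ncard : ℝ) ≤ min (A.ncard * (n * p n) / 15) (n / 15) →
          ((edgesBetween (erGraph ω) A B).ncard : ℝ) < A.ncard * (n * p n) / 2} with hf
  have h_upper : ∀ n, f n ≤ 1 := fun n => prob_le_one
  have h_lower : ∀ᶠ n : ℕ in atTop, 1 - ENNReal.ofReal (((n:ℝ) + 1)⁻¹) ≤ f n := by
    filter_upwards [eventually_ge_atTop 149] with n hn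
    have hn16 : 16 ≤ n := by omega
    have hn0 : (0:ℝ) < n := by
      have : (149:ℝ) ≤ n := by exact_mod_cast hn
      linarith
    have hP : (Real.log n) ^ 4 ≤ n * p n := by
      have := hp n
      rw [div_le_iff₀ hn0] at this
      linarith [this]
    have hbad := main_bound n (p n) hn16 (hp0 n) (hp1 n) hP
    -- real estimate : (n+1)^2 * exp(-L^4/20) ≤ (n+1)⁻¹
    set L := Real.log n with hL
    have he : Real.exp 1 < 2.7182818286 := Real.exp_one_lt_d9
    have hL5 : 5 ≤ L := by
      have h149 : Real.exp 5 ≤ 149 := by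
        have h5 : Real.exp 5 = Real.exp 1 ^ 5 := by
          rw [← Real.exp_nat_mul]; norm_num
        have hpow : Real.exp 1 ^ 5 ≤ 2.7182818286 ^ 5 :=
          pow_le_pow_left₀ (Real.exp_pos 1).le he.le 5
        have : (2.7182818286:ℝ) ^ 5 ≤ 149 := by norm_num
        linarith
      have : Real.exp 5 ≤ (n:ℝ) := by
        have : (149:ℝ) ≤ n := by exact_mod_cast hn
        linarith
      calc (5:ℝ) = Real.log (Real.exp 5) := (Real.log_exp 5).symm
        _ ≤ L := Real.log_le_log (Real.exp_pos 5) this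
    have hlogn1 : (n:ℝ) + 1 ≤ Real.exp (1 + L) := by
      have h149' : (149:ℝ) ≤ n := by exact_mod_cast hn
      have h1 : (n:ℝ) + 1 ≤ 2 * n := by linarith
      have h2 : (2:ℝ) ≤ Real.exp 1 := by
        have := Real.add_one_le_exp (1:ℝ); linarith
      calc (n:ℝ) + 1 ≤ 2 * n := h1
        _ ≤ Real.exp 1 * Real.exp L := by
            rw [hL, Real.exp_log hn0]
            exact mul_le_mul_of_nonneg_right h2 hn0.le
        _ = Real.exp (1 + L) := (Real.exp_add 1 L).symm
    have hreal : (((n : ℝ) + 1)) ^ 2 * Real.exp (-(L ^ 4) / 20) ≤ ((n:ℝ) + 1)⁻¹ := by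
      have hstep : (((n : ℝ) + 1)) ^ 2 * Real.exp (-(L ^ 4) / 20) ≤
          Real.exp (1 + L) ^ 2 * Real.exp (-(L ^ 4) / 20) := by
        apply mul_le_mul_of_nonneg_right _ (Real.exp_pos _).le
        exact pow_le_pow_left₀ (by positivity) hlogn1 2
      have hexp : Real.exp (1 + L) ^ 2 * Real.exp (-(L ^ 4) / 20) ≤
          Real.exp (-(1 + L)) := by
        rw [← Real.exp_nat_mul, ← Real.exp_add, Real.exp_le_exp]
        push_cast
        nlinarith [hL5, sq_nonneg L, sq_nonneg (L - 5)]
      have hinv : Real.exp (-(1 + L)) ≤ ((n:ℝ) + 1)⁻¹ := by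
        rw [Real.exp_neg]
        exact inv_anti₀ (by positivity) hlogn1
      linarith
    have hbad2 : erMeasure n (p n) {ω | ∀ A B : Set (Fin n), A.Nonempty → Disjoint A B →
          (B.ncard : ℝ) ≤ min (A.ncard * (n * p n) / 15) (n / 15) →
          ((edgesBetween (erGraph ω) A B).ncard : ℝ) < A.ncard * (n * p n) / 2}ᶜ ≤
        ENNReal.ofReal (((n:ℝ) + 1)⁻¹) :=
      hbad.trans (ENNReal.ofReal_le_ofReal hreal)
    rw [tsub_le_iff_right]
    calc (1 : ℝ≥0∞) = erMeasure n (p n) Set.univ := (measure_univ).symm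
      _ ≤ f n + erMeasure n (p n) _ᶜ := by
          rw [hf]
          refine le_trans (measure_mono (by rw [Set.union_compl_self])) (measure_union_le _ _)
      _ ≤ f n + ENNReal.ofReal (((n:ℝ) + 1)⁻¹) := by
          exact add_le_add le_rfl hbad2
  have h_lim : Tendsto (fun n : ℕ => 1 - ENNReal.ofReal (((n:ℝ) + 1)⁻¹)) atTop (nhds 1) := by
    have h0 : Tendsto (fun n : ℕ => ENNReal.ofReal (((n:ℝ) + 1)⁻¹)) atTop (nhds 0) := by
      have hr : Tendsto (fun n : ℕ => ((n:ℝ) + 1)⁻¹) atTop (nhds 0) := by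
        have := tendsto_one_div_add_atTop_nhds_zero_nat (𝕜 := ℝ)
        simpa [one_div] using this
      have := (ENNReal.tendsto_ofReal hr)
      simpa using this
    have := ENNReal.Tendsto.sub (tendsto_const_nhds (x := (1:ℝ≥0∞))) h0 (Or.inl ENNReal.one_ne_top)
    simpa using this
  exact tendsto_of_tendsto_of_tendsto_of_le_of_le' h_lim tendsto_const_nhds h_lower
    (Eventually.of_forall h_upper)
end
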